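/- Let s ∈ ℝ, and suppose either p ∈ (0,∞), q ∈ (0,∞) and τ ∈ (1/p, ∞), or q = ∞ and τ ∈ [1/p, ∞). Then there exists a constant C > 0 (depending only on n, p, q, τ) such that for every sequence t = {t_Q} indexed by dyadic cubes, ‖t‖_{ḟ^{s,τ}_{p,q}} ≤ C ‖t‖_{ḟ^{s+n(τ-1/p)}_{∞,∞}}. Consequently the two sequence norms are equivalent. -/
import Mathlib


open MeasureTheory ENNReal

/-- A dyadic cube `Q_{jk} = 2^{-j}([0,1)^n + k)` in `ℝⁿ`, recorded by its
generation `j ∈ ℤ` and position `k ∈ ℤⁿ`. -/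
structure DyadicCube (n : ℕ) where
  j : ℤ
  k : Fin n → ℤ

namespace DyadicCube

/-- The dyadic cube as a subset of `ℝⁿ`. -/
def toSet {n : ℕ} (Q : DyadicCube n) : Set (Fin n → ℝ) :=
  {x | ∀ i, (Q.k i : ℝ) * (2 : ℝ) ^ (-Q.j) ≤ x i ∧
        x i < ((Q.k i : ℝ) + 1) * (2 : ℝ) ^ (-Q.j)}

/-- The Lebesgue measure `|Q| = 2^{-jn}` of a dyadic cube, as an element of `ℝ≥0∞`. -/
noncomputable def vol {n : ℕ} (Q : DyadicCube n) : ℝ≥0∞ :=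
  (2 : ℝ≥0∞) ^ (-(Q.j : ℝ) * n)

/-- The characteristic function `χ_Q`, with values in `ℝ≥0∞`. -/
noncomputable def ind {n : ℕ} (Q : DyadicCube n) (x : Fin n → ℝ) : ℝ≥0∞ :=
  Q.toSet.indicator (fun _ => (1 : ℝ≥0∞)) x

end DyadicCube

open DyadicCube

/-- The coefficient `|Q|^{-s/n - 1/2}`. -/
noncomputable def coeff {n : ℕ} (s : ℝ) (Q : DyadicCube n) : ℝ≥0∞ :=
  Q.vol ^ (-(s / (n : ℝ)) - 1 / 2)

/-- The `ℓ^q`-norm `(Σ_i a_i^q)^{1/q}` of a family of extended nonnegative reals,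
with the usual modification (`sup`) when `q = ∞`. -/
noncomputable def lqSum {ι : Type*} (q : ℝ≥0∞) (a : ι → ℝ≥0∞) : ℝ≥0∞ :=
  if q = ∞ then ⨆ i, a i else (∑' i, a i ^ q.toReal) ^ (1 / q.toReal)

/-- The `L^p`-norm `(∫_A g^p dx)^{1/p}` over a set `A ⊆ ℝⁿ`, with the usual
modification (`sup` over `x ∈ A`) when `p = ∞`. -/
noncomputable def lpIntOn {n : ℕ} (p : ℝ≥0∞) (A : Set (Fin n → ℝ))
    (g : (Fin n → ℝ) → ℝ≥0∞) : ℝ≥0∞ :=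
  if p = ∞ then ⨆ x ∈ A, g x
  else (∫⁻ x in A, g x ^ p.toReal) ^ (1 / p.toReal)

/-- The Triebel–Lizorkin-type sequence norm
`‖t‖_{ḟ^{s,τ}_{p,q}} = sup_P |P|^{-τ} ( ∫_P ( Σ_{Q ⊆ P} [|Q|^{-s/n-1/2} |t_Q| χ_Q(x)]^q )^{p/q} dx )^{1/p}`,
with the usual modifications when `p = ∞` or `q = ∞`. -/
noncomputable def fNorm (n : ℕ) (s τ : ℝ) (p q : ℝ≥0∞) (t : DyadicCube n → ℂ) : ℝ≥0∞ :=
  ⨆ P : DyadicCube n, P.vol ^ (-τ) *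
    lpIntOn p P.toSet fun x =>
      lqSum q fun Q : {Q : DyadicCube n // Q.toSet ⊆ P.toSet} =>
        coeff s Q.1 * ‖t Q.1‖₊ * ind Q.1 x

/-- The Besov-type sequence norm
`‖t‖_{ḃ^{s,τ}_{p,q}} = sup_P |P|^{-τ} ( Σ_{j ≥ j_P} ( ∫_P [ Σ_{Q ⊆ P, ℓ(Q)=2^{-j}} |Q|^{-s/n-1/2} |t_Q| χ_Q(x) ]^p dx )^{q/p} )^{1/q}`,
with the usual modifications when `p = ∞` or `q = ∞`. -/
noncomputable def bNorm (n : ℕ) (s τ : ℝ) (p q : ℝ≥0∞) (t : DyadicCube n → ℂ) : ℝ≥0∞ :=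
  ⨆ P : DyadicCube n, P.vol ^ (-τ) *
    lqSum q fun j : {j : ℤ // P.j ≤ j} =>
      lpIntOn p P.toSet fun x =>
        ∑' Q : {Q : DyadicCube n // Q.toSet ⊆ P.toSet ∧ Q.j = j.1},
          coeff s Q.1 * ‖t Q.1‖₊ * ind Q.1 x

/-- The `ḟ^{σ}_{∞,∞} = ḃ^{σ}_{∞,∞}` sequence norm `sup_Q |Q|^{-σ/n - 1/2} |t_Q|`. -/
noncomputable def supNorm (n : ℕ) (σ : ℝ) (t : DyadicCube n → ℂ) : ℝ≥0∞ :=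
  ⨆ Q : DyadicCube n, coeff σ Q * ‖t Q‖₊

/-- The test sequence with `t_{R_j} = |R_j|^{s/n + 1/2 + τ - 1/p}` for
`R_j = [0,2^{-j})^n` (the dyadic cube with `k = 0`), and `t_Q = 0` otherwise. -/
noncomputable def testSeq (n : ℕ) (s τ p : ℝ) : DyadicCube n → ℂ := fun Q =>
  if Q.k = 0 then
    ((((2 : ℝ) ^ (-(Q.j : ℝ) * n)) ^ (s / n + 1 / 2 + τ - 1 / p) : ℝ) : ℂ)
  else 0

/-- The cube `R_j = [0, 2^{-j})^n`. -/
def Rcube (n : ℕ) (j : ℤ) : DyadicCube n := ⟨j, 0⟩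

section Aux

open Set

variable {n : ℕ}

lemma two_rpow_ne_zero (y : ℝ) : ((2:ℝ≥0∞) ^ y) ≠ 0 := by
  simp [ENNReal.rpow_eq_zero_iff]

lemma two_rpow_ne_top (y : ℝ) : ((2:ℝ≥0∞) ^ y) ≠ ⊤ := by
  simp [ENNReal.rpow_eq_top_iff]

lemma vol_ne_zero (Q : DyadicCube n) : Q.vol ≠ 0 := two_rpow_ne_zero _

lemma vol_ne_top (Q : DyadicCube n) : Q.vol ≠ ⊤ := two_rpow_ne_top _

lemma toSet_eq (Q : DyadicCube n) :
    Q.toSet = Set.univ.pi (fun i => Set.Ico ((Q.k i : ℝ) * (2:ℝ) ^ (-Q.j))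
      (((Q.k i : ℝ) + 1) * (2:ℝ) ^ (-Q.j))) := by
  ext x
  simp [DyadicCube.toSet, Set.mem_pi, Set.mem_Ico]

lemma measurableSet_toSet (Q : DyadicCube n) : MeasurableSet Q.toSet := by
  rw [toSet_eq]
  exact MeasurableSet.univ_pi (fun i => measurableSet_Ico)

lemma ofReal_two_zpow (m : ℤ) :
    ENNReal.ofReal ((2:ℝ) ^ m) = (2:ℝ≥0∞) ^ (m : ℝ) := by
  rw [← Real.rpow_intCast 2 m, ← ENNReal.ofReal_rpow_of_pos two_pos]
  norm_num

lemma volume_toSet (Q : DyadicCube n) : MeasureTheory.volume Q.toSet = Q.vol := by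
  rw [toSet_eq, MeasureTheory.volume_pi_pi]
  have h1 : ∀ i : Fin n, MeasureTheory.volume
      (Set.Ico ((Q.k i : ℝ) * (2:ℝ) ^ (-Q.j)) (((Q.k i : ℝ) + 1) * (2:ℝ) ^ (-Q.j)))
      = ENNReal.ofReal ((2:ℝ) ^ (-Q.j)) := by
    intro i
    rw [Real.volume_Ico]
    congr 1
    ring
  simp only [h1, Finset.prod_const, Finset.card_univ, Fintype.card_fin]
  rw [ofReal_two_zpow, ← ENNReal.rpow_natCast ((2:ℝ≥0∞) ^ ((-Q.j : ℤ) : ℝ)) n,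
    ← ENNReal.rpow_mul]
  unfold DyadicCube.vol
  norm_num

lemma mem_toSet_iff {Q : DyadicCube n} {x : Fin n → ℝ} :
    x ∈ Q.toSet ↔ ∀ i, (Q.k i : ℝ) ≤ x i * 2 ^ Q.j ∧ x i * 2 ^ Q.j < Q.k i + 1 := by
  have h2 : (0:ℝ) < 2 ^ Q.j := by positivity
  constructor
  · intro hx i
    obtain ⟨h1, h3⟩ := hx i
    constructor
    · calc (Q.k i : ℝ) = (Q.k i : ℝ) * 2 ^ (-Q.j) * 2 ^ Q.j := by
            rw [mul_assoc, ← zpow_add₀ (two_ne_zero) (-Q.j) Q.j]; simp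
        _ ≤ x i * 2 ^ Q.j := by gcongr
    · calc x i * 2 ^ Q.j < ((Q.k i : ℝ) + 1) * 2 ^ (-Q.j) * 2 ^ Q.j := by gcongr
        _ = (Q.k i : ℝ) + 1 := by
            rw [mul_assoc, ← zpow_add₀ (two_ne_zero) (-Q.j) Q.j]; simp
  · intro hx i
    obtain ⟨h1, h3⟩ := hx i
    have e : x i = x i * 2 ^ Q.j * 2 ^ (-Q.j) := by
      rw [mul_assoc, ← zpow_add₀ (two_ne_zero) Q.j (-Q.j)]; simp
    constructor
    · rw [e]; gcongr
    · rw [e]; gcongr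

/-- Two dyadic cubes of the same generation containing a common point coincide. -/
lemma eq_of_mem_of_same_gen {Q Q' : DyadicCube n} {x : Fin n → ℝ}
    (hj : Q.j = Q'.j) (hx : x ∈ Q.toSet) (hx' : x ∈ Q'.toSet) : Q = Q' := by
  rw [mem_toSet_iff] at hx hx'
  obtain ⟨j, k⟩ := Q
  obtain ⟨j', k'⟩ := Q'
  simp only at hj
  subst hj
  congr 1
  funext i
  obtain ⟨h1, h2⟩ := hx i
  obtain ⟨h3, h4⟩ := hx' i
  have e1 : ⌊x i * 2 ^ j⌋ = k i := Int.floor_eq_iff.mpr ⟨h1, by push_cast; linarith⟩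
  have e2 : ⌊x i * 2 ^ j⌋ = k' i := Int.floor_eq_iff.mpr ⟨h3, by push_cast; linarith⟩
  rw [← e1, e2]

/-- A cube contained in another has larger (or equal) generation index. -/
lemma gen_le {P Q : DyadicCube n} (hn : 0 < n) (h : Q.toSet ⊆ P.toSet) : P.j ≤ Q.j := by
  set i0 : Fin n := ⟨0, hn⟩
  have hx : (fun i => (Q.k i : ℝ) * (2:ℝ) ^ (-Q.j)) ∈ Q.toSet := by
    intro i
    dsimp only
    have h0 : (0:ℝ) < (2:ℝ) ^ (-Q.j) := by positivity
    exact ⟨le_refl _, by nlinarith⟩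
  have hm : (fun i => ((Q.k i : ℝ) + 1/2) * (2:ℝ) ^ (-Q.j)) ∈ Q.toSet := by
    intro i
    dsimp only
    have h0 : (0:ℝ) < (2:ℝ) ^ (-Q.j) := by positivity
    exact ⟨by nlinarith, by nlinarith⟩
  have h1 := (h hx) i0
  have h2 := (h hm) i0
  have key : (1/2 : ℝ) * (2:ℝ) ^ (-Q.j) < (2:ℝ) ^ (-P.j) := by
    have a1 : (P.k i0 : ℝ) * (2:ℝ) ^ (-P.j) ≤ (Q.k i0 : ℝ) * (2:ℝ) ^ (-Q.j) := h1.1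
    have a2 : ((Q.k i0 : ℝ) + 1/2) * (2:ℝ) ^ (-Q.j) < ((P.k i0 : ℝ) + 1) * (2:ℝ) ^ (-P.j) := h2.2
    nlinarith
  have key2 : (2:ℝ) ^ (-Q.j - 1) < (2:ℝ) ^ (-P.j) := by
    rw [zpow_sub₀ (two_ne_zero)]
    calc (2:ℝ) ^ (-Q.j) / 2 ^ (1:ℤ) = (1/2) * (2:ℝ) ^ (-Q.j) := by ring
      _ < _ := key
  have := (zpow_lt_zpow_iff_right₀ (by norm_num : (1:ℝ) < 2)).mp key2
  omega

end Aux

section Aux2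

variable {n : ℕ}

lemma coeff_eq (hn : (n:ℝ) ≠ 0) (s a : ℝ) (Q : DyadicCube n) :
    coeff s Q = coeff (s + n * a) Q * Q.vol ^ a := by
  unfold coeff
  rw [← ENNReal.rpow_add _ _ (vol_ne_zero Q) (vol_ne_top Q)]
  congr 1
  field_simp
  ring

lemma vol_rpow (Q : DyadicCube n) (a : ℝ) :
    Q.vol ^ a = (2:ℝ≥0∞) ^ (-(Q.j:ℝ) * ((n:ℝ) * a)) := by
  unfold DyadicCube.vol
  rw [← ENNReal.rpow_mul]
  ring_nf

/-- Bijection between `ℕ` and the integers `≥ a`. -/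
def eNat (a : ℤ) : ℕ ≃ {j : ℤ // a ≤ j} where
  toFun m := ⟨a + m, by omega⟩
  invFun j := (j.1 - a).toNat
  left_inv m := by simp
  right_inv j := by
    ext
    simp only
    omega

lemma tsum_gen (P : DyadicCube n) (c : ℝ) :
    ∑' j : {j : ℤ // P.j ≤ j}, (2:ℝ≥0∞) ^ (-(j.1:ℝ) * c)
      = (2:ℝ≥0∞) ^ (-(P.j:ℝ) * c) * (1 - (2:ℝ≥0∞) ^ (-c))⁻¹ := by
  rw [← (eNat P.j).tsum_eq]
  have h : ∀ m : ℕ, (2:ℝ≥0∞) ^ (-(((eNat P.j) m).1:ℝ) * c)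
      = (2:ℝ≥0∞) ^ (-(P.j:ℝ) * c) * ((2:ℝ≥0∞) ^ (-c)) ^ m := by
    intro m
    have e1 : (-((((eNat P.j) m).1):ℝ)) * c = -(P.j:ℝ) * c + (-c) * (m:ℕ) := by
      show (-(((P.j + (m:ℤ)):ℤ)):ℝ) * c = _
      push_cast
      ring
    rw [e1, ENNReal.rpow_add _ _ (by norm_num) (by norm_num), ENNReal.rpow_mul 2 (-c) (m:ℝ),
      ENNReal.rpow_natCast]
  simp only [h]
  rw [ENNReal.tsum_mul_left, ENNReal.tsum_geometric]

lemma const_lt_one {c : ℝ} (hc : 0 < c) : (2:ℝ≥0∞) ^ (-c) < 1 := by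
  rw [show (1:ℝ≥0∞) = 2 ^ (0:ℝ) by simp]
  exact ENNReal.rpow_lt_rpow_of_exponent_lt (by norm_num) (by norm_num) (by linarith)

end Aux2

section Lower

variable {n : ℕ}

lemma lower_bound (hn : 0 < n) (s τ : ℝ) (p q : ℝ≥0∞) (hq : q ≠ 0)
    (hp : 0 < p) (hp' : p ≠ ∞) (t : DyadicCube n → ℂ) :
    supNorm n (s + n * (τ - 1 / p.toReal)) t ≤ fNorm n s τ p q t := by
  have hnR : (n:ℝ) ≠ 0 := Nat.cast_ne_zero.mpr hn.ne'
  have hpr : 0 < p.toReal := ENNReal.toReal_pos hp.ne' hp'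
  refine iSup_le fun Q0 => le_trans ?_ (le_iSup _ Q0)
  set c : ℝ≥0∞ := coeff s Q0 * ‖t Q0‖₊ with hc
  have key : ∀ x ∈ Q0.toSet, c ≤ lqSum q fun Q : {Q : DyadicCube n // Q.toSet ⊆ Q0.toSet} =>
      coeff s Q.1 * ‖t Q.1‖₊ * DyadicCube.ind Q.1 x := by
    intro x hx
    have hval : (fun Q : {Q : DyadicCube n // Q.toSet ⊆ Q0.toSet} =>
        coeff s Q.1 * ‖t Q.1‖₊ * DyadicCube.ind Q.1 x) ⟨Q0, subset_rfl⟩ = c := by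
      simp [DyadicCube.ind, Set.indicator_of_mem hx, hc]
    unfold lqSum
    split_ifs with hqi
    · rw [← hval]
      exact le_iSup (α := ℝ≥0∞) _ (⟨Q0, subset_rfl⟩ : {Q : DyadicCube n // Q.toSet ⊆ Q0.toSet})
    · have hqr : 0 < q.toReal := ENNReal.toReal_pos hq hqi
      have hcc : c = (c ^ q.toReal) ^ (1 / q.toReal) := by
        rw [← ENNReal.rpow_mul, mul_one_div_cancel hqr.ne', ENNReal.rpow_one]
      rw [hcc]
      refine ENNReal.rpow_le_rpow ?_ (by positivity)
      rw [← hval]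
      exact ENNReal.le_tsum _
  have hint : c ^ p.toReal * Q0.vol ≤
      ∫⁻ x in Q0.toSet, (lqSum q fun Q : {Q : DyadicCube n // Q.toSet ⊆ Q0.toSet} =>
        coeff s Q.1 * ‖t Q.1‖₊ * DyadicCube.ind Q.1 x) ^ p.toReal := by
    rw [← volume_toSet Q0, ← MeasureTheory.setLIntegral_const]
    exact MeasureTheory.setLIntegral_mono' (measurableSet_toSet Q0)
      (fun x hx => ENNReal.rpow_le_rpow (key x hx) hpr.le)
  have hlp : c * Q0.vol ^ (1 / p.toReal) ≤ lpIntOn p Q0.toSet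
      (fun x => lqSum q fun Q : {Q : DyadicCube n // Q.toSet ⊆ Q0.toSet} =>
        coeff s Q.1 * ‖t Q.1‖₊ * DyadicCube.ind Q.1 x) := by
    unfold lpIntOn
    rw [if_neg hp']
    calc c * Q0.vol ^ (1 / p.toReal) = (c ^ p.toReal * Q0.vol) ^ (1 / p.toReal) := by
          rw [ENNReal.mul_rpow_of_nonneg _ _ (by positivity), ← ENNReal.rpow_mul,
            mul_one_div_cancel hpr.ne', ENNReal.rpow_one]
      _ ≤ _ := ENNReal.rpow_le_rpow hint (by positivity)
  have ee : Q0.vol ^ (-τ) * (c * Q0.vol ^ (1 / p.toReal)) =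
      coeff (s + n * (τ - 1 / p.toReal)) Q0 * ‖t Q0‖₊ := by
    rw [hc]
    unfold coeff
    rw [show Q0.vol ^ (-τ) * (Q0.vol ^ (-(s / (n:ℝ)) - 1/2) * (‖t Q0‖₊ : ℝ≥0∞) *
        Q0.vol ^ (1 / p.toReal)) = Q0.vol ^ (-τ) * Q0.vol ^ (-(s / (n:ℝ)) - 1/2) *
        Q0.vol ^ (1 / p.toReal) * (‖t Q0‖₊ : ℝ≥0∞) by ring]
    rw [← ENNReal.rpow_add _ _ (vol_ne_zero Q0) (vol_ne_top Q0),
      ← ENNReal.rpow_add _ _ (vol_ne_zero Q0) (vol_ne_top Q0)]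
    congr 2
    field_simp
    ring
  rw [← ee]
  exact mul_le_mul_right hlp _

end Lower

section Upper

variable {n : ℕ}

/-- Step B: from a pointwise bound on the inner `ℓ^q`-sum, bound the full `P`-term. -/
lemma stepB (s τ : ℝ) (p q : ℝ≥0∞) (hp : 0 < p) (hp' : p ≠ ∞)
    (t : DyadicCube n → ℂ) (P : DyadicCube n) (D M : ℝ≥0∞)
    (hA : ∀ x ∈ P.toSet, (lqSum q fun Q : {Q : DyadicCube n // Q.toSet ⊆ P.toSet} =>
      coeff s Q.1 * ‖t Q.1‖₊ * DyadicCube.ind Q.1 x) ≤ D * M * P.vol ^ (τ - 1 / p.toReal)) :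
    P.vol ^ (-τ) * lpIntOn p P.toSet (fun x =>
      lqSum q fun Q : {Q : DyadicCube n // Q.toSet ⊆ P.toSet} =>
        coeff s Q.1 * ‖t Q.1‖₊ * DyadicCube.ind Q.1 x) ≤ D * M := by
  have hpr : 0 < p.toReal := ENNReal.toReal_pos hp.ne' hp'
  set a : ℝ := τ - 1 / p.toReal with ha
  unfold lpIntOn
  rw [if_neg hp']
  have h1 : (∫⁻ x in P.toSet, (lqSum q fun Q : {Q : DyadicCube n // Q.toSet ⊆ P.toSet} =>
      coeff s Q.1 * ‖t Q.1‖₊ * DyadicCube.ind Q.1 x) ^ p.toReal) ≤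
      (D * M * P.vol ^ a) ^ p.toReal * P.vol := by
    calc _ ≤ ∫⁻ _x in P.toSet, (D * M * P.vol ^ a) ^ p.toReal :=
          MeasureTheory.setLIntegral_mono' (measurableSet_toSet P)
            (fun x hx => ENNReal.rpow_le_rpow (hA x hx) hpr.le)
      _ = (D * M * P.vol ^ a) ^ p.toReal * P.vol := by
          rw [MeasureTheory.setLIntegral_const, volume_toSet]
  calc P.vol ^ (-τ) * (∫⁻ x in P.toSet, (lqSum q fun Q : {Q : DyadicCube n // Q.toSet ⊆ P.toSet} =>
        coeff s Q.1 * ‖t Q.1‖₊ * DyadicCube.ind Q.1 x) ^ p.toReal) ^ (1 / p.toReal)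
      ≤ P.vol ^ (-τ) * ((D * M * P.vol ^ a) ^ p.toReal * P.vol) ^ (1 / p.toReal) :=
        mul_le_mul_right (ENNReal.rpow_le_rpow h1 (by positivity)) _
    _ = D * M * (P.vol ^ (-τ) * (P.vol ^ a * P.vol ^ (1 / p.toReal))) := by
        rw [ENNReal.mul_rpow_of_nonneg _ _ (by positivity : (0:ℝ) ≤ 1 / p.toReal),
          ← ENNReal.rpow_mul, mul_one_div_cancel hpr.ne', ENNReal.rpow_one]
        ring
    _ = D * M := by
        rw [← ENNReal.rpow_add _ _ (vol_ne_zero P) (vol_ne_top P),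
          ← ENNReal.rpow_add _ _ (vol_ne_zero P) (vol_ne_top P),
          show -τ + (a + 1 / p.toReal) = 0 by rw [ha]; ring, ENNReal.rpow_zero, mul_one]

end Upper

section StepA

variable {n : ℕ}

lemma termBound (hn : 0 < n) (s a : ℝ) (t : DyadicCube n → ℂ) (Q : DyadicCube n) :
    coeff s Q * ‖t Q‖₊ ≤ supNorm n (s + n * a) t * Q.vol ^ a := by
  have hnR : (n:ℝ) ≠ 0 := Nat.cast_ne_zero.mpr hn.ne'
  rw [coeff_eq hnR s a Q]
  calc coeff (s + n * a) Q * Q.vol ^ a * ‖t Q‖₊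
      = coeff (s + n * a) Q * ‖t Q‖₊ * Q.vol ^ a := by ring
    _ ≤ supNorm n (s + n * a) t * Q.vol ^ a :=
        mul_le_mul_left (le_iSup (α := ℝ≥0∞) _ Q) _

lemma vol_le {P Q : DyadicCube n} (hn : 0 < n) (h : Q.toSet ⊆ P.toSet) : Q.vol ≤ P.vol := by
  have hj : (P.j : ℝ) ≤ (Q.j : ℝ) := by exact_mod_cast gen_le hn h
  unfold DyadicCube.vol
  exact ENNReal.rpow_le_rpow_of_exponent_le (by norm_num)
    (mul_le_mul_of_nonneg_right (neg_le_neg hj) (Nat.cast_nonneg n))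

lemma stepA_inf (hn : 0 < n) (s τ : ℝ) (p : ℝ≥0∞) (ha0 : 0 ≤ τ - 1 / p.toReal)
    (t : DyadicCube n → ℂ) (P : DyadicCube n) (x : Fin n → ℝ) :
    (lqSum ∞ fun Q : {Q : DyadicCube n // Q.toSet ⊆ P.toSet} =>
        coeff s Q.1 * ‖t Q.1‖₊ * DyadicCube.ind Q.1 x)
      ≤ 1 * supNorm n (s + n * (τ - 1 / p.toReal)) t * P.vol ^ (τ - 1 / p.toReal) := by
  set a := τ - 1 / p.toReal
  unfold lqSum
  rw [if_pos rfl, one_mul]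
  refine iSup_le fun Q => ?_
  by_cases hxQ : x ∈ Q.1.toSet
  · simp only [DyadicCube.ind, Set.indicator_of_mem hxQ, mul_one]
    calc coeff s Q.1 * ‖t Q.1‖₊ ≤ supNorm n (s + n * a) t * Q.1.vol ^ a :=
          termBound hn s a t Q.1
      _ ≤ supNorm n (s + n * a) t * P.vol ^ a :=
          mul_le_mul_right (ENNReal.rpow_le_rpow (vol_le hn Q.2) ha0) _
  · simp [DyadicCube.ind, Set.indicator_of_notMem hxQ]

lemma stepA_fin (hn : 0 < n) (s τ : ℝ) (p q : ℝ≥0∞) (hq : q ≠ 0) (hq' : q ≠ ∞)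
    (ha : 0 < τ - 1 / p.toReal) (t : DyadicCube n → ℂ) (P : DyadicCube n)
    (x : Fin n → ℝ) :
    (lqSum q fun Q : {Q : DyadicCube n // Q.toSet ⊆ P.toSet} =>
        coeff s Q.1 * ‖t Q.1‖₊ * DyadicCube.ind Q.1 x)
      ≤ ((1 - (2:ℝ≥0∞) ^ (-((n:ℝ) * (τ - 1 / p.toReal) * q.toReal)))⁻¹) ^ (1 / q.toReal)
        * supNorm n (s + n * (τ - 1 / p.toReal)) t * P.vol ^ (τ - 1 / p.toReal) := by
  have hnR : (n:ℝ) ≠ 0 := Nat.cast_ne_zero.mpr hn.ne'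
  have hqr : 0 < q.toReal := ENNReal.toReal_pos hq hq'
  set a := τ - 1 / p.toReal with hadef
  set M := supNorm n (s + n * a) t with hMdef
  set qr := q.toReal with hqrdef
  unfold lqSum
  rw [if_neg hq']
  set f : {Q : DyadicCube n // Q.toSet ⊆ P.toSet} → ℝ≥0∞ := fun Q =>
    coeff s Q.1 * ‖t Q.1‖₊ * DyadicCube.ind Q.1 x with hf
  have hts : ∑' Q, f Q ^ qr ≤ M ^ qr * (P.vol ^ a) ^ qr *
      (1 - (2:ℝ≥0∞) ^ (-((n:ℝ) * a * qr)))⁻¹ := by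
    have hsupp : Function.support (fun Q => f Q ^ qr) ⊆
        {Q : {Q : DyadicCube n // Q.toSet ⊆ P.toSet} | x ∈ Q.1.toSet} := by
      intro Q hQ
      by_contra hxQ
      apply hQ
      have hx' : x ∉ Q.1.toSet := hxQ
      have hf0 : f Q = 0 := by
        simp [hf, DyadicCube.ind, Set.indicator_of_notMem hx']
      show f Q ^ qr = 0
      rw [hf0, ENNReal.zero_rpow_of_pos hqr]
    rw [← tsum_subtype_eq_of_support_subset hsupp]
    set S := {Q : {Q : DyadicCube n // Q.toSet ⊆ P.toSet} | x ∈ Q.1.toSet} with hS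
    have hinj : Function.Injective
        (fun Q : S => (⟨Q.1.1.j, gen_le hn Q.1.2⟩ : {j : ℤ // P.j ≤ j})) := by
      intro Q1 Q2 h12
      have hj : Q1.1.1.j = Q2.1.1.j := congrArg Subtype.val h12
      exact Subtype.ext (Subtype.ext (eq_of_mem_of_same_gen hj Q1.2 Q2.2))
    set g : {j : ℤ // P.j ≤ j} → ℝ≥0∞ :=
      fun j => M ^ qr * (2:ℝ≥0∞) ^ (-(j.1:ℝ) * ((n:ℝ) * a * qr)) with hg
    have hbd : ∀ Q : S, f Q.1 ^ qr ≤ g ⟨Q.1.1.j, gen_le hn Q.1.2⟩ := by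
      intro Q
      have hxQ : x ∈ Q.1.1.toSet := Q.2
      have hb : f Q.1 ≤ M * (2:ℝ≥0∞) ^ (-(Q.1.1.j:ℝ) * ((n:ℝ) * a)) := by
        rw [hf]
        simp only [DyadicCube.ind, Set.indicator_of_mem hxQ, mul_one]
        rw [← vol_rpow]
        exact termBound hn s a t Q.1.1
      calc f Q.1 ^ qr ≤ (M * (2:ℝ≥0∞) ^ (-(Q.1.1.j:ℝ) * ((n:ℝ) * a))) ^ qr :=
            ENNReal.rpow_le_rpow hb hqr.le
        _ = g ⟨Q.1.1.j, gen_le hn Q.1.2⟩ := by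
            rw [hg]
            simp only
            rw [ENNReal.mul_rpow_of_nonneg _ _ hqr.le, ← ENNReal.rpow_mul]
            congr 2
            ring
    calc ∑' Q : S, f Q.1 ^ qr ≤ ∑' Q : S, g ⟨Q.1.1.j, gen_le hn Q.1.2⟩ :=
          ENNReal.tsum_le_tsum hbd
      _ ≤ ∑' j, g j := tsum_comp_le_tsum_of_injective hinj g
      _ = M ^ qr * ((2:ℝ≥0∞) ^ (-(P.j:ℝ) * ((n:ℝ) * a * qr)) *
            (1 - (2:ℝ≥0∞) ^ (-((n:ℝ) * a * qr)))⁻¹) := by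
          rw [hg, ENNReal.tsum_mul_left, tsum_gen P ((n:ℝ) * a * qr)]
      _ = M ^ qr * (P.vol ^ a) ^ qr * (1 - (2:ℝ≥0∞) ^ (-((n:ℝ) * a * qr)))⁻¹ := by
          rw [vol_rpow P a, ← ENNReal.rpow_mul,
            show (-(P.j:ℝ) * ((n:ℝ) * a)) * qr = -(P.j:ℝ) * ((n:ℝ) * a * qr) by ring]
          ring
  calc (∑' Q, f Q ^ qr) ^ (1 / qr)
      ≤ (M ^ qr * (P.vol ^ a) ^ qr * (1 - (2:ℝ≥0∞) ^ (-((n:ℝ) * a * qr)))⁻¹) ^ (1 / qr) :=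
        ENNReal.rpow_le_rpow hts (by positivity)
    _ = (1 - (2:ℝ≥0∞) ^ (-((n:ℝ) * a * qr)))⁻¹ ^ (1 / qr) * M * P.vol ^ a := by
        rw [ENNReal.mul_rpow_of_nonneg _ _ (by positivity : (0:ℝ) ≤ 1 / qr),
          ENNReal.mul_rpow_of_nonneg _ _ (by positivity : (0:ℝ) ≤ 1 / qr),
          ← ENNReal.rpow_mul M, ← ENNReal.rpow_mul (P.vol ^ a),
          mul_one_div_cancel hqr.ne', ENNReal.rpow_one, ENNReal.rpow_one]
        ring

end StepA

/-- if `p ∈ (0,∞)` and either `q ∈ (0,∞)` with `τ ∈ (1/p,∞)`, or `q = ∞`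
with `τ ∈ [1/p,∞)`, then there is a constant `C ∈ (0,∞)` with
`‖t‖_{ḟ^{s,τ}_{p,q}} ≤ C ‖t‖_{ḟ^{s+n(τ-1/p)}_{∞,∞}}` for all sequences `t`;
together with the trivial reverse inequality the two norms are equivalent. -/
theorem stmt1 (n : ℕ) (hn : 0 < n) (s τ : ℝ) (p q : ℝ≥0∞)
    (hp : 0 < p) (hp' : p ≠ ∞)
    (h : (q ≠ ∞ ∧ 0 < q ∧ 1 / p.toReal < τ) ∨ (q = ∞ ∧ 1 / p.toReal ≤ τ)) :
    ∃ C : ℝ≥0∞, 0 < C ∧ C ≠ ∞ ∧ ∀ t : DyadicCube n → ℂ,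
      fNorm n s τ p q t ≤ C * supNorm n (s + n * (τ - 1 / p.toReal)) t ∧
      supNorm n (s + n * (τ - 1 / p.toReal)) t ≤ fNorm n s τ p q t := by
  have hnR : (0:ℝ) < (n:ℝ) := Nat.cast_pos.mpr hn
  rcases h with ⟨hq', hq, hτ⟩ | ⟨hq', hτ⟩
  · -- q finite
    have ha : 0 < τ - 1 / p.toReal := by linarith
    have hqr : 0 < q.toReal := ENNReal.toReal_pos hq.ne' hq'
    set r : ℝ≥0∞ := (2:ℝ≥0∞) ^ (-((n:ℝ) * (τ - 1 / p.toReal) * q.toReal)) with hr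
    have hr1 : r < 1 := const_lt_one (by positivity)
    have hbne : (1 - r) ≠ 0 := by
      rw [ne_eq, tsub_eq_zero_iff_le]
      exact (not_le).mpr hr1
    have hbnetop : (1 - r)⁻¹ ≠ ⊤ := ENNReal.inv_ne_top.mpr hbne
    have hbne0 : (1 - r)⁻¹ ≠ 0 := by
      rw [ne_eq, ENNReal.inv_eq_zero]
      exact ne_top_of_le_ne_top one_ne_top tsub_le_self
    refine ⟨((1 - r)⁻¹) ^ (1 / q.toReal), ?_, ?_, fun t => ⟨?_, lower_bound hn s τ p q hq.ne' hp hp' t⟩⟩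
    · exact ENNReal.rpow_pos (pos_iff_ne_zero.mpr hbne0) hbnetop
    · exact (ENNReal.rpow_lt_top_of_nonneg (by positivity) hbnetop).ne
    · unfold fNorm
      exact iSup_le fun P => stepB s τ p q hp hp' t P _ _
        (fun x _hx => stepA_fin hn s τ p q hq.ne' hq' ha t P x)
  · -- q = ∞
    subst hq'
    have ha0 : 0 ≤ τ - 1 / p.toReal := by linarith
    refine ⟨1, one_pos, one_ne_top, fun t => ⟨?_, lower_bound hn s τ p ⊤ top_ne_zero hp hp' t⟩⟩
    unfold fNorm
    rw [one_mul]
    have := iSup_le fun P => stepB s τ p ⊤ hp hp' t P 1 _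
      (fun x _hx => stepA_inf hn s τ p ha0 t P x)
    rw [one_mul] at this
    exact this
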